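/- For every n ≥ 1, B_n · C_n = t · J_{v_n}, where v_n := (v+(2^{n+1}−4)t)·2^{n−1}. -/

import Mathlib

open Matrix Kronecker

def Jmat (m l : ℕ) : Matrix (Fin m) (Fin l) ℤ := Matrix.of fun _ _ => 1
def Kmat (m : ℕ) : Matrix (Fin m) (Fin m) ℤ :=
  Matrix.of fun i j => if (j : ℕ) = m - 1 - (i : ℕ) then 1 else 0
def kron {m n p q : ℕ} (A : Matrix (Fin m) (Fin n) ℤ) (B : Matrix (Fin p) (Fin q) ℤ) :
    Matrix (Fin (m * p)) (Fin (n * q)) ℤ :=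
  Matrix.reindex finProdFinEquiv finProdFinEquiv (A ⊗ₖ B)
def castM {m n m' n' : ℕ} (hm : m = m') (hn : n = n') (A : Matrix (Fin m) (Fin n) ℤ) :
    Matrix (Fin m') (Fin n') ℤ :=
  Matrix.reindex (finCongr hm) (finCongr hn) A
def alphaM {m l : ℕ} (s : ℕ) (X : Matrix (Fin m) (Fin l) ℤ) :
    Matrix (Fin (m / s)) (Fin l) ℤ :=
  Matrix.of fun i j => X (Fin.castLE (Nat.div_le_self m s) i) j
def vstack {m₁ m₂ l : ℕ} (X : Matrix (Fin m₁) (Fin l) ℤ) (Y : Matrix (Fin m₂) (Fin l) ℤ) :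
    Matrix (Fin (m₁ + m₂)) (Fin l) ℤ :=
  Matrix.reindex finSumFinEquiv (Equiv.refl _) (Matrix.fromRows X Y)
def hstack {m l₁ l₂ : ℕ} (X : Matrix (Fin m) (Fin l₁) ℤ) (Y : Matrix (Fin m) (Fin l₂) ℤ) :
    Matrix (Fin m) (Fin (l₁ + l₂)) ℤ :=
  Matrix.reindex (Equiv.refl _) finSumFinEquiv (Matrix.fromCols X Y)
def block2 {a b c d : ℕ} (A : Matrix (Fin a) (Fin c) ℤ) (B : Matrix (Fin a) (Fin d) ℤ)
    (C : Matrix (Fin b) (Fin c) ℤ) (D : Matrix (Fin b) (Fin d) ℤ) :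
    Matrix (Fin (a + b)) (Fin (c + d)) ℤ :=
  Matrix.reindex finSumFinEquiv finSumFinEquiv (Matrix.fromBlocks A B C D)
lemma four_pow_eq (n : ℕ) : (4 : ℕ) ^ n = 2 ^ n * 2 ^ n := by
  rw [show (4 : ℕ) = 2 * 2 from rfl, mul_pow]
lemma t_four_pow_div (t n : ℕ) : t * 4 ^ n / 2 ^ n = t * 2 ^ n := by
  rw [four_pow_eq, ← mul_assoc, Nat.mul_div_cancel _ (by positivity)]
def vnum (v t n : ℕ) : ℕ := (v + (2 ^ (n + 1) - 4) * t) * 2 ^ (n - 1)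
lemma vnum_one (v t : ℕ) : vnum v t 1 = v := by norm_num [vnum]
lemma vnum_succ (v t n : ℕ) :
    vnum v t (n + 2) = 2 * vnum v t (n + 1) + 2 * (t * 4 ^ (n + 1)) := by
  unfold vnum
  simp only [show n + 2 + 1 = n + 3 from rfl, show n + 2 - 1 = n + 1 from rfl,
    show n + 1 + 1 = n + 2 from rfl, show n + 1 - 1 = n from rfl]
  have h2 : (4 : ℕ) ≤ 2 ^ (n + 2) := by
    calc (4 : ℕ) = 2 ^ 2 := rfl
    _ ≤ 2 ^ (n + 2) := Nat.pow_le_pow_right (by norm_num) (by omega)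
  have h3 : (4 : ℕ) ≤ 2 ^ (n + 3) := le_trans h2 (Nat.pow_le_pow_right (by norm_num) (by omega))
  rw [four_pow_eq]
  zify [h2, h3]
  ring
def Pmat (t n : ℕ) : Matrix (Fin (t * 4 ^ n)) (Fin (t * 4 ^ n)) ℤ :=
  castM (by rw [four_pow_eq]; ring) (by rw [four_pow_eq]; ring)
    (kron (kron (Jmat (2 ^ n) 1) (Kmat (2 ^ n))) (Jmat t (t * 2 ^ n)))
def Pone (t : ℕ) : Matrix (Fin (4 * t)) (Fin (4 * t)) ℤ :=
  castM (by ring) (by ring) (kron (kron (Jmat 2 1) (Kmat 2)) (Jmat t (2 * t)))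

/-- The recursively defined sequence `P'_n` of Lemma 2. -/
def P'mat (t : ℕ) : (n : ℕ) → Matrix (Fin (t * 4 ^ n)) (Fin (t * 4 ^ n)) ℤ
  | 0 => 0
  | 1 => castM (by ring) (by ring) (kron (kron (Jmat 2 1) (Kmat 2)) (Jmat t (2 * t)))
  | (n + 2) =>
      castM
        (by rw [t_four_pow_div, four_pow_eq]; ring)
        (by ring)
        (kron (kron (kron (Jmat (2 ^ (n + 2)) 1) (Kmat 2))
          (alphaM (2 ^ (n + 1)) (P'mat t (n + 1)))) (Jmat 1 2))

/-- The recursively defined sequence `B_n` (with `B_1` given). -/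
def Bmat (t v : ℕ) (B₁ : Matrix (Fin v) (Fin (4 * t)) ℤ) :
    (n : ℕ) → Matrix (Fin (vnum v t n)) (Fin (t * 4 ^ n)) ℤ
  | 0 => 0
  | 1 => castM (vnum_one v t).symm (by ring) B₁
  | (n + 2) =>
      castM (by rw [vnum_succ]; try ring) (by ring)
        (vstack (kron (kron (Kmat 2) (Bmat t v B₁ (n + 1))) (Jmat 1 2))
          (kron (kron (1 : Matrix (Fin 2) (Fin 2) ℤ) (Pmat t (n + 1))) (Jmat 1 2)))

/-- The recursively defined sequence `C_n` (with `C_1` given). -/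
def Cmat (t v : ℕ) (C₁ : Matrix (Fin (4 * t)) (Fin v) ℤ) :
    (n : ℕ) → Matrix (Fin (t * 4 ^ n)) (Fin (vnum v t n)) ℤ
  | 0 => 0
  | 1 => castM (by ring) (vnum_one v t).symm C₁
  | (n + 2) =>
      castM (by rw [t_four_pow_div, four_pow_eq]; ring) (by rw [vnum_succ]; try ring)
        (hstack
          (kron (kron (Jmat (2 ^ (n + 2)) 1) (1 : Matrix (Fin 2) (Fin 2) ℤ))
            (alphaM (2 ^ (n + 1)) (Cmat t v C₁ (n + 1))))
          (kron (kron (Jmat (2 ^ (n + 2)) 1) (1 : Matrix (Fin 2) (Fin 2) ℤ))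
            (alphaM (2 ^ (n + 1)) (Pmat t (n + 1)))))

/-- The recursively defined sequence `A_n` (with `A_1`, `B_1`, `C_1` given). -/
def Amat (t v : ℕ) (A₁ : Matrix (Fin v) (Fin v) ℤ) (B₁ : Matrix (Fin v) (Fin (4 * t)) ℤ)
    (C₁ : Matrix (Fin (4 * t)) (Fin v) ℤ) :
    (n : ℕ) → Matrix (Fin (vnum v t n)) (Fin (vnum v t n)) ℤ
  | 0 => 0
  | 1 => castM (vnum_one v t).symm (vnum_one v t).symm A₁
  | (n + 2) =>
      castM (by rw [vnum_succ]) (by rw [vnum_succ])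
        (block2 (kron (1 : Matrix (Fin 2) (Fin 2) ℤ) (Amat t v A₁ B₁ C₁ (n + 1)))
          (kron (1 : Matrix (Fin 2) (Fin 2) ℤ) (Bmat t v B₁ (n + 1)))
          (kron (Kmat 2) (Cmat t v C₁ (n + 1)))
          (kron (Kmat 2) (Pmat t (n + 1))))

section Helpers

lemma castM_apply {m n m' n' : ℕ} (hm : m = m') (hn : n = n') (A : Matrix (Fin m) (Fin n) ℤ)
    (i : Fin m') (j : Fin n') :
    castM hm hn A i j = A ⟨i, hm ▸ i.isLt⟩ ⟨j, hn ▸ j.isLt⟩ := by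
  subst hm; subst hn; rfl

lemma kron_apply {m n p q : ℕ} (A : Matrix (Fin m) (Fin n) ℤ) (B : Matrix (Fin p) (Fin q) ℤ)
    (i : Fin (m * p)) (j : Fin (n * q)) :
    kron A B i j = A i.divNat j.divNat * B i.modNat j.modNat := rfl

lemma vstack_apply_left {m₁ m₂ l : ℕ} (X : Matrix (Fin m₁) (Fin l) ℤ)
    (Y : Matrix (Fin m₂) (Fin l) ℤ) (i : Fin (m₁ + m₂)) (j : Fin l) (h : (i : ℕ) < m₁) :
    vstack X Y i j = X ⟨i, h⟩ j := by
  have : finSumFinEquiv.symm i = Sum.inl ⟨i, h⟩ := by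
    rw [Equiv.symm_apply_eq]; ext; simp
  simp [vstack, this]

lemma vstack_apply_right {m₁ m₂ l : ℕ} (X : Matrix (Fin m₁) (Fin l) ℤ)
    (Y : Matrix (Fin m₂) (Fin l) ℤ) (i : Fin (m₁ + m₂)) (j : Fin l) (h : m₁ ≤ (i : ℕ)) :
    vstack X Y i j = Y ⟨(i : ℕ) - m₁, by omega⟩ j := by
  have : finSumFinEquiv.symm i = Sum.inr ⟨(i : ℕ) - m₁, by omega⟩ := by
    rw [Equiv.symm_apply_eq]; ext; simp; omega
  simp [vstack, this]

lemma hstack_apply_left {m l₁ l₂ : ℕ} (X : Matrix (Fin m) (Fin l₁) ℤ)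
    (Y : Matrix (Fin m) (Fin l₂) ℤ) (i : Fin m) (j : Fin (l₁ + l₂)) (h : (j : ℕ) < l₁) :
    hstack X Y i j = X i ⟨j, h⟩ := by
  have : finSumFinEquiv.symm j = Sum.inl ⟨j, h⟩ := by
    rw [Equiv.symm_apply_eq]; ext; simp
  simp [hstack, this]

lemma hstack_apply_right {m l₁ l₂ : ℕ} (X : Matrix (Fin m) (Fin l₁) ℤ)
    (Y : Matrix (Fin m) (Fin l₂) ℤ) (i : Fin m) (j : Fin (l₁ + l₂)) (h : l₁ ≤ (j : ℕ)) :
    hstack X Y i j = Y i ⟨(j : ℕ) - l₁, by omega⟩ := by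
  have : finSumFinEquiv.symm j = Sum.inr ⟨(j : ℕ) - l₁, by omega⟩ := by
    rw [Equiv.symm_apply_eq]; ext; simp; omega
  simp [hstack, this]

lemma Jmat_apply (m l : ℕ) (i : Fin m) (j : Fin l) : Jmat m l i j = 1 := rfl

lemma Kmat_apply (m : ℕ) (i j : Fin m) :
    Kmat m i j = if (j : ℕ) = m - 1 - (i : ℕ) then 1 else 0 := rfl

lemma one2_apply (i j : Fin 2) :
    (1 : Matrix (Fin 2) (Fin 2) ℤ) i j = if (i : ℕ) = (j : ℕ) then 1 else 0 := by
  rw [Matrix.one_apply]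
  congr 1
  simp [Fin.ext_iff, eq_comm]

lemma div_mod_block {E : ℕ} (y a b : ℕ) (hb : b < E) :
    (y / E = a ∧ y % E = b) ↔ y = a * E + b := by
  constructor
  · rintro ⟨h1, h2⟩
    conv_lhs => rw [← Nat.div_add_mod' y E]
    rw [h1, h2]
  · rintro rfl
    have hE : 0 < E := by omega
    constructor
    · rw [add_comm, Nat.add_mul_div_right _ _ hE, Nat.div_eq_of_lt hb, zero_add]
    · rw [add_comm, Nat.add_mul_mod_self_right, Nat.mod_eq_of_lt hb]

end Helpers
lemma block_split {E S : ℕ} (x a b : ℕ) (hb : b < E) :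
    (x / (E * S) = a ∧ (x % (E * S)) / S = b) ↔ x / S = a * E + b := by
  rw [mul_comm E S, ← Nat.div_div_eq_div_mul, Nat.mod_mul_right_div_self]
  exact div_mod_block (x / S) a b hb

lemma sum_block {M s : ℕ} (hs : 0 < s) (b : ℕ) (hb : s * b + s ≤ M) (h : Fin M → ℤ) :
    (∑ i : Fin M, if (i : ℕ) / s = b then h i else 0) =
      ∑ r : Fin s, h ⟨s * b + (r : ℕ), by omega⟩ := by
  rw [← Finset.sum_filter]
  refine Finset.sum_nbij' (fun i => (⟨(i : ℕ) % s, Nat.mod_lt _ hs⟩ : Fin s))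
    (fun r => (⟨s * b + (r : ℕ), by omega⟩ : Fin M)) (fun a _ => Finset.mem_univ _)
    ?_ ?_ ?_ ?_
  · intro r _
    simp only [Finset.mem_filter, Finset.mem_univ, true_and]
    rw [Nat.mul_add_div hs, Nat.div_eq_of_lt r.isLt, add_zero]
  · intro a ha
    simp only [Finset.mem_filter, Finset.mem_univ, true_and] at ha
    have h2 := Nat.div_add_mod (a : ℕ) s
    rw [ha] at h2
    exact Fin.ext h2
  · intro r _
    ext
    simp only
    rw [add_comm, Nat.add_mul_mod_self_left, Nat.mod_eq_of_lt r.isLt]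
  · intro a ha
    simp only [Finset.mem_filter, Finset.mem_univ, true_and] at ha
    have h2 := Nat.div_add_mod (a : ℕ) s
    rw [ha] at h2
    congr 1
    exact Fin.ext h2.symm

/-- rows are 0/1-blocky indicators of blocks of size `s`. -/
def RowBlocky (s : ℕ) {m l : ℕ} (X : Matrix (Fin m) (Fin l) ℤ) : Prop :=
  ∀ i : Fin m, ∃ b : ℕ, s * b + s ≤ l ∧
    ∀ j : Fin l, X i j = if (j : ℕ) / s = b then 1 else 0

/-- each column has sum `t` within each block of `s` rows. -/
def ColSum (s t : ℕ) {m l : ℕ} (X : Matrix (Fin m) (Fin l) ℤ) : Prop :=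
  ∀ j : Fin l, ∀ b : ℕ, s * b + s ≤ m →
    (∑ i : Fin m, if (i : ℕ) / s = b then X i j else 0) = (t : ℤ)

lemma mul_eq_smul_J {m l p s t : ℕ} (hs : 0 < s)
    (B : Matrix (Fin m) (Fin l) ℤ) (C : Matrix (Fin l) (Fin p) ℤ)
    (hB : RowBlocky s B) (hC : ColSum s t C) :
    B * C = (t : ℤ) • Jmat m p := by
  ext i j
  obtain ⟨b, hb, hrow⟩ := hB i
  rw [Matrix.mul_apply]
  calc (∑ k, B i k * C k j) = ∑ k : Fin l, if (k : ℕ) / s = b then C k j else 0 := by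
        refine Finset.sum_congr rfl fun k _ => ?_
        rw [hrow k, ite_mul, one_mul, zero_mul]
    _ = (t : ℤ) := hC j b hb
    _ = ((t : ℤ) • Jmat m p) i j := by simp [Jmat]
lemma Pmat_apply (t n : ℕ) (i j : Fin (t * 4 ^ n)) :
    Pmat t n i j =
      if (j : ℕ) / (t * 2 ^ n) = 2 ^ n - 1 - ((i : ℕ) / t) % 2 ^ n then 1 else 0 := by
  simp only [Pmat, castM_apply, kron_apply, Jmat_apply, Kmat_apply, one_mul, mul_one]
  have hj : ((j : ℕ) / (t * 2 ^ n)) % 2 ^ n = (j : ℕ) / (t * 2 ^ n) := by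
    apply Nat.mod_eq_of_lt
    apply Nat.div_lt_of_lt_mul
    have := j.isLt
    calc (j : ℕ) < t * 4 ^ n := this
      _ = t * 2 ^ n * 2 ^ n := by rw [four_pow_eq]; ring
      _ = t * 2 ^ n * 2 ^ n := rfl
  simp only [Fin.modNat, Fin.divNat]
  exact if_congr (by rw [hj]) rfl rfl

lemma rowBlocky_P (t n : ℕ) (ht : 0 < t) : RowBlocky (t * 2 ^ n) (Pmat t n) := by
  intro i
  refine ⟨2 ^ n - 1 - ((i : ℕ) / t) % 2 ^ n, ?_, fun j => Pmat_apply t n i j⟩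
  have h1 : 2 ^ n - 1 - ((i : ℕ) / t) % 2 ^ n + 1 ≤ 2 ^ n := by
    have : 0 < 2 ^ n := Nat.pow_pos (by norm_num)
    omega
  calc t * 2 ^ n * (2 ^ n - 1 - ((i : ℕ) / t) % 2 ^ n) + t * 2 ^ n
      = t * 2 ^ n * (2 ^ n - 1 - ((i : ℕ) / t) % 2 ^ n + 1) := by ring
    _ ≤ t * 2 ^ n * 2 ^ n := Nat.mul_le_mul_left _ h1
    _ = t * 4 ^ n := by rw [four_pow_eq]; ring

lemma colSum_P (t n : ℕ) (ht : 0 < t) : ColSum (t * 2 ^ n) t (Pmat t n) := by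
  intro j b hb
  have hpow : 0 < 2 ^ n := Nat.pow_pos (by norm_num)
  have hs : 0 < t * 2 ^ n := by positivity
  rw [sum_block hs b hb]
  have hd : (j : ℕ) / (t * 2 ^ n) < 2 ^ n := by
    apply Nat.div_lt_of_lt_mul
    calc (j : ℕ) < t * 4 ^ n := j.isLt
      _ = t * 2 ^ n * 2 ^ n := by rw [four_pow_eq]; ring
  obtain ⟨d, hdef⟩ : ∃ d, (j : ℕ) / (t * 2 ^ n) = d := ⟨_, rfl⟩
  rw [hdef] at hd
  have key : ∀ r : Fin (t * 2 ^ n),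
      Pmat t n ⟨t * 2 ^ n * b + (r : ℕ), by omega⟩ j
        = if (r : ℕ) / t = 2 ^ n - 1 - d then 1 else 0 := by
    intro r
    rw [Pmat_apply]
    have hr : (t * 2 ^ n * b + (r : ℕ)) / t = 2 ^ n * b + (r : ℕ) / t := by
      rw [show t * 2 ^ n * b = t * (2 ^ n * b) by ring, Nat.mul_add_div ht]
    have hrt : (r : ℕ) / t < 2 ^ n := by
      apply Nat.div_lt_of_lt_mul
      calc (r : ℕ) < t * 2 ^ n := r.isLt
        _ = t * 2 ^ n := rfl
    have hmod : (2 ^ n * b + (r : ℕ) / t) % 2 ^ n = (r : ℕ) / t := by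
      rw [add_comm, Nat.add_mul_mod_self_left, Nat.mod_eq_of_lt hrt]
    rw [hr]
    exact if_congr (by rw [hmod, hdef]; omega) rfl rfl
  calc (∑ r : Fin (t * 2 ^ n), Pmat t n ⟨t * 2 ^ n * b + (r : ℕ), by omega⟩ j)
      = ∑ r : Fin (t * 2 ^ n), if (r : ℕ) / t = 2 ^ n - 1 - d then 1 else 0 :=
        Finset.sum_congr rfl fun r _ => key r
    _ = ∑ u : Fin t, 1 := by
        refine sum_block ht _ ?_ (fun _ => 1)
        have h1 : 2 ^ n - 1 - d + 1 ≤ 2 ^ n := by omega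
        calc t * (2 ^ n - 1 - d) + t = t * (2 ^ n - 1 - d + 1) := by ring
          _ ≤ t * 2 ^ n := Nat.mul_le_mul_left _ h1
    _ = (t : ℤ) := by simp
section EntryLemmas

variable (t v : ℕ) (B₁ : Matrix (Fin v) (Fin (4 * t)) ℤ) (C₁ : Matrix (Fin (4 * t)) (Fin v) ℤ)

lemma Bmat_apply_left (n : ℕ) (ht : 0 < t) (hV : 0 < vnum v t (n + 1))
    (i : Fin (vnum v t (n + 2))) (j : Fin (t * 4 ^ (n + 2)))
    (hiv : (i : ℕ) < 2 * vnum v t (n + 1)) :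
    Bmat t v B₁ (n + 2) i j =
      (if ((j : ℕ) / 2) / (t * 4 ^ (n + 1)) = 1 - (i : ℕ) / vnum v t (n + 1) then 1 else 0) *
        Bmat t v B₁ (n + 1) ⟨(i : ℕ) % vnum v t (n + 1), Nat.mod_lt _ hV⟩
          ⟨((j : ℕ) / 2) % (t * 4 ^ (n + 1)), Nat.mod_lt _ (by positivity)⟩ := by
  conv_lhs => rw [Bmat]
  rw [castM_apply, vstack_apply_left _ _ _ _ (by simpa using hiv)]
  simp only [kron_apply, Jmat_apply, Kmat_apply, mul_one]
  simp only [Fin.divNat, Fin.modNat]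
  simp only [Nat.div_one]

lemma Bmat_apply_right (n : ℕ) (ht : 0 < t)
    (i : Fin (vnum v t (n + 2))) (j : Fin (t * 4 ^ (n + 2)))
    (hiv : 2 * vnum v t (n + 1) ≤ (i : ℕ)) :
    Bmat t v B₁ (n + 2) i j =
      (if ((i : ℕ) - 2 * vnum v t (n + 1)) / (t * 4 ^ (n + 1)) =
          ((j : ℕ) / 2) / (t * 4 ^ (n + 1)) then 1 else 0) *
        Pmat t (n + 1) ⟨((i : ℕ) - 2 * vnum v t (n + 1)) % (t * 4 ^ (n + 1)),
            Nat.mod_lt _ (by positivity)⟩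
          ⟨((j : ℕ) / 2) % (t * 4 ^ (n + 1)), Nat.mod_lt _ (by positivity)⟩ := by
  conv_lhs => rw [Bmat]
  rw [castM_apply, vstack_apply_right _ _ _ _ (by simpa using hiv)]
  simp only [kron_apply, Jmat_apply, one2_apply, mul_one]
  simp only [Fin.divNat, Fin.modNat]
  simp only [Nat.div_one, mul_one]

lemma Cmat_apply_left (n : ℕ) (ht : 0 < t) (hV : 0 < vnum v t (n + 1))
    (i : Fin (t * 4 ^ (n + 2))) (j : Fin (vnum v t (n + 2)))
    (hjv : (j : ℕ) < 2 * vnum v t (n + 1)) :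
    Cmat t v C₁ (n + 2) i j =
      (if ((i : ℕ) / (t * 2 ^ (n + 1))) % 2 = ((j : ℕ) / vnum v t (n + 1)) % 2
          then 1 else 0) *
        Cmat t v C₁ (n + 1)
          ⟨(i : ℕ) % (t * 2 ^ (n + 1)), by
            have h1 : (i : ℕ) % (t * 2 ^ (n + 1)) < t * 2 ^ (n + 1) :=
              Nat.mod_lt _ (by positivity)
            have h2 : t * 2 ^ (n + 1) ≤ t * 4 ^ (n + 1) :=
              Nat.mul_le_mul_left _ (Nat.pow_le_pow_left (by norm_num) _)
            omega⟩
          ⟨(j : ℕ) % vnum v t (n + 1), Nat.mod_lt _ hV⟩ := by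
  have e : t * 4 ^ (n + 1) / 2 ^ (n + 1) = t * 2 ^ (n + 1) := t_four_pow_div t (n + 1)
  conv_lhs => rw [Cmat]
  rw [castM_apply, hstack_apply_left _ _ _ _ (by simpa using hjv)]
  simp only [kron_apply, Jmat_apply, one2_apply, alphaM, Matrix.of_apply, one_mul]
  simp only [Fin.divNat, Fin.modNat, Fin.castLE]
  simp only [e]

lemma Cmat_apply_right (n : ℕ) (ht : 0 < t)
    (i : Fin (t * 4 ^ (n + 2))) (j : Fin (vnum v t (n + 2)))
    (hjv : 2 * vnum v t (n + 1) ≤ (j : ℕ)) :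
    Cmat t v C₁ (n + 2) i j =
      (if ((i : ℕ) / (t * 2 ^ (n + 1))) % 2 =
          (((j : ℕ) - 2 * vnum v t (n + 1)) / (t * 4 ^ (n + 1))) % 2 then 1 else 0) *
        Pmat t (n + 1)
          ⟨(i : ℕ) % (t * 2 ^ (n + 1)), by
            have h1 : (i : ℕ) % (t * 2 ^ (n + 1)) < t * 2 ^ (n + 1) :=
              Nat.mod_lt _ (by positivity)
            have h2 : t * 2 ^ (n + 1) ≤ t * 4 ^ (n + 1) :=
              Nat.mul_le_mul_left _ (Nat.pow_le_pow_left (by norm_num) _)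
            omega⟩
          ⟨((j : ℕ) - 2 * vnum v t (n + 1)) % (t * 4 ^ (n + 1)),
            Nat.mod_lt _ (by positivity)⟩ := by
  have e : t * 4 ^ (n + 1) / 2 ^ (n + 1) = t * 2 ^ (n + 1) := t_four_pow_div t (n + 1)
  conv_lhs => rw [Cmat]
  rw [castM_apply, hstack_apply_right _ _ _ _ (by simpa using hjv)]
  simp only [kron_apply, Jmat_apply, one2_apply, alphaM, Matrix.of_apply, one_mul]
  simp only [Fin.divNat, Fin.modNat, Fin.castLE]
  simp only [e]

end EntryLemmas
section Base

variable {t v : ℕ} {B₁ : Matrix (Fin v) (Fin (4 * t)) ℤ} {C₁ : Matrix (Fin (4 * t)) (Fin v) ℤ}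

lemma ite_one_mul_ite (P Q : Prop) [Decidable P] [Decidable Q] (x : ℤ) :
    (if P then (1 : ℤ) else 0) * (if Q then x else 0) =
      if P ∧ Q then x else 0 := by
  by_cases hP : P <;> by_cases hQ : Q <;> simp [hP, hQ]

lemma rowBlocky_B1 (ht : 0 < t)
    (hblockB : ∀ i : Fin v, ∃! b : Fin 2, ∀ j : Fin (4 * t),
      B₁ i j = if (j : ℕ) / (2 * t) = (b : ℕ) then 1 else 0) :
    RowBlocky (t * 2 ^ 1) (Bmat t v B₁ 1) := by
  intro i
  obtain ⟨b, hbprop, -⟩ := hblockB ⟨(i : ℕ), by have h := i.isLt; have h2 := vnum_one v t; omega⟩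
  refine ⟨(b : ℕ), ?_, ?_⟩
  · have hb : (b : ℕ) ≤ 1 := by omega
    calc t * 2 ^ 1 * (b : ℕ) + t * 2 ^ 1 ≤ t * 2 ^ 1 * 1 + t * 2 ^ 1 :=
          Nat.add_le_add_right (Nat.mul_le_mul_left _ hb) _
      _ = t * 4 ^ 1 := by ring
  · intro j
    conv_lhs => rw [Bmat]
    rw [castM_apply, hbprop ⟨(j : ℕ), by have := j.isLt; omega⟩]
    exact if_congr (by rw [show t * 2 ^ 1 = 2 * t by ring]) rfl rfl

lemma colSum_C1 (ht : 0 < t)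
    (hC01 : ∀ i j, C₁ i j = 0 ∨ C₁ i j = 1)
    (hblockC : ∀ j : Fin v, ∀ b : Fin 2,
      (Finset.univ.filter fun i : Fin (4 * t) =>
        (i : ℕ) / (2 * t) = (b : ℕ) ∧ C₁ i j = 1).card = t) :
    ColSum (t * 2 ^ 1) t (Cmat t v C₁ 1) := by
  intro j b hb
  have hA : 0 < t * 2 ^ 1 := by positivity
  have hb2 : b < 2 := by
    by_contra hcon
    push_neg at hcon
    have h1 : t * 2 ^ 1 * 2 ≤ t * 2 ^ 1 * b := Nat.mul_le_mul_left _ hcon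
    have h2 : t * 4 ^ 1 = 2 * (t * 2 ^ 1) := by ring
    omega
  set j' : Fin v := ⟨(j : ℕ), by have h := j.isLt; have h2 := vnum_one v t; omega⟩ with hj'
  have key : ∀ i : Fin (t * 4 ^ 1),
      (if (i : ℕ) / (t * 2 ^ 1) = b then Cmat t v C₁ 1 i j else 0) =
        if ((i : ℕ) / (2 * t) = b ∧ C₁ ⟨(i : ℕ), by have := i.isLt; omega⟩ j' = 1)
          then 1 else 0 := by
    intro i
    have hent : Cmat t v C₁ 1 i j = C₁ ⟨(i : ℕ), by have := i.isLt; omega⟩ j' := by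
      conv_lhs => rw [Cmat]
      rw [castM_apply]
    rw [hent, show t * 2 ^ 1 = 2 * t by ring]
    rcases hC01 ⟨(i : ℕ), by have := i.isLt; omega⟩ j' with h | h <;> simp [h]
  rw [Finset.sum_congr rfl fun i _ => key i]
  have hcast : t * 4 ^ 1 = 4 * t := by ring
  rw [Fintype.sum_equiv (finCongr hcast)
    (fun i => if ((i : ℕ) / (2 * t) = b ∧ C₁ ⟨(i : ℕ), by have := i.isLt; omega⟩ j' = 1)
      then (1 : ℤ) else 0)
    (fun i => if ((i : ℕ) / (2 * t) = b ∧ C₁ i j' = 1) then (1 : ℤ) else 0)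
    (fun i => by simp only [finCongr_apply, Fin.coe_cast]; rfl)]
  rw [Finset.sum_boole]
  rw [show ((Finset.univ.filter fun i : Fin (4 * t) =>
      (i : ℕ) / (2 * t) = b ∧ C₁ i j' = 1).card : ℤ) = ((t : ℕ) : ℤ) from ?_]
  · exact congrArg _ (hblockC j' ⟨b, hb2⟩)

end Base
section Induction

variable {t v : ℕ} {B₁ : Matrix (Fin v) (Fin (4 * t)) ℤ} {C₁ : Matrix (Fin (4 * t)) (Fin v) ℤ}

lemma vnum_pos (hv : 0 < v) (t n : ℕ) : 0 < vnum v t n := by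
  unfold vnum
  have : 0 < 2 ^ (n - 1) := Nat.pow_pos (by norm_num)
  exact Nat.mul_pos (by omega) this

lemma rowBlocky_B (ht : 0 < t) (hv : 0 < v)
    (hblockB : ∀ i : Fin v, ∃! b : Fin 2, ∀ j : Fin (4 * t),
      B₁ i j = if (j : ℕ) / (2 * t) = (b : ℕ) then 1 else 0) :
    ∀ n, 1 ≤ n → RowBlocky (t * 2 ^ n) (Bmat t v B₁ n) := by
  intro n hn
  induction n, hn using Nat.le_induction with
  | base => exact rowBlocky_B1 ht hblockB
  | succ n hn IH =>
    obtain ⟨m, rfl⟩ : ∃ m, n = m + 1 := ⟨n - 1, by omega⟩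
    intro i
    set V := vnum v t (m + 1) with hVdef
    set L := t * 4 ^ (m + 1) with hLdef
    set S := t * 2 ^ (m + 1) with hSdef
    have hV : 0 < V := vnum_pos hv t (m + 1)
    have hS : 0 < S := by positivity
    have hLS : L = 2 ^ (m + 1) * S := by rw [hLdef, hSdef, four_pow_eq]; ring
    have h2S : t * 2 ^ (m + 2) = 2 * S := by rw [hSdef]; ring
    have hE : 0 < 2 ^ (m + 1) := Nat.pow_pos (by norm_num)
    have hbig : t * 4 ^ (m + 2) = (2 * S) * 2 ^ (m + 2) := by
      rw [hSdef, four_pow_eq]; ring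
    have h2pow : (2 : ℕ) ^ (m + 2) = 2 * 2 ^ (m + 1) := by ring
    by_cases hiv : (i : ℕ) < 2 * V
    · -- top block
      obtain ⟨b, hbb, hrow⟩ := IH ⟨(i : ℕ) % V, Nat.mod_lt _ hV⟩
      have hb : b < 2 ^ (m + 1) := by
        have h1 : L = S * 2 ^ (m + 1) := by rw [hLS]; ring
        have h3 : S * (b + 1) ≤ S * 2 ^ (m + 1) := by
          rw [Nat.mul_add, Nat.mul_one]; omega
        have := Nat.le_of_mul_le_mul_left h3 hS
        omega
      have ha : (i : ℕ) / V < 2 := Nat.div_lt_of_lt_mul (by omega)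
      refine ⟨(1 - (i : ℕ) / V) * 2 ^ (m + 1) + b, ?_, ?_⟩
      · have hb' : (1 - (i : ℕ) / V) * 2 ^ (m + 1) + b + 1 ≤ 2 ^ (m + 2) := by
          have h1 : (1 - (i : ℕ) / V) * 2 ^ (m + 1) ≤ 1 * 2 ^ (m + 1) :=
            Nat.mul_le_mul_right _ (Nat.sub_le 1 _)
          omega
        calc t * 2 ^ (m + 2) * ((1 - (i : ℕ) / V) * 2 ^ (m + 1) + b) + t * 2 ^ (m + 2)
            = t * 2 ^ (m + 2) * ((1 - (i : ℕ) / V) * 2 ^ (m + 1) + b + 1) := by ring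
          _ ≤ t * 2 ^ (m + 2) * 2 ^ (m + 2) := Nat.mul_le_mul_left _ hb'
          _ = t * 4 ^ (m + 2) := by rw [four_pow_eq]; ring
      · intro j
        rw [Bmat_apply_left t v B₁ m ht hV i j hiv]
        rw [hrow ⟨((j : ℕ) / 2) % L, Nat.mod_lt _ (by positivity)⟩]
        rw [ite_one_mul_ite]
        refine if_congr ?_ rfl rfl
        show ((j : ℕ) / 2) / L = 1 - (i : ℕ) / V ∧ (((j : ℕ) / 2) % L) / S = b ↔
          (j : ℕ) / (t * 2 ^ (m + 2)) = (1 - (i : ℕ) / V) * 2 ^ (m + 1) + b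
        rw [hLS, block_split ((j : ℕ) / 2) (1 - (i : ℕ) / V) b hb,
          Nat.div_div_eq_div_mul, h2S]
    · -- bottom block
      push_neg at hiv
      have hi2L : (i : ℕ) - 2 * V < 2 * L := by
        have h1 := i.isLt
        have h2 : vnum v t (m + 1 + 1) = 2 * V + 2 * L := by rw [vnum_succ]
        omega
      obtain ⟨p, hpb, hprow⟩ := rowBlocky_P t (m + 1) ht
        ⟨((i : ℕ) - 2 * V) % L, Nat.mod_lt _ (by positivity)⟩
      have hp : p < 2 ^ (m + 1) := by
        have h1 : t * 4 ^ (m + 1) = t * 2 ^ (m + 1) * 2 ^ (m + 1) := by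
          rw [four_pow_eq]; ring
        have h3 : t * 2 ^ (m + 1) * (p + 1) ≤ t * 2 ^ (m + 1) * 2 ^ (m + 1) := by
          rw [Nat.mul_add, Nat.mul_one]; omega
        have := Nat.le_of_mul_le_mul_left h3 hS
        omega
      have ha : ((i : ℕ) - 2 * V) / L < 2 := Nat.div_lt_of_lt_mul (by omega)
      refine ⟨(((i : ℕ) - 2 * V) / L) * 2 ^ (m + 1) + p, ?_, ?_⟩
      · have hb' : (((i : ℕ) - 2 * V) / L) * 2 ^ (m + 1) + p + 1 ≤ 2 ^ (m + 2) := by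
          have h1 : (((i : ℕ) - 2 * V) / L) * 2 ^ (m + 1) ≤ 1 * 2 ^ (m + 1) :=
            Nat.mul_le_mul_right _ (Nat.lt_succ_iff.mp ha)
          omega
        calc t * 2 ^ (m + 2) * ((((i : ℕ) - 2 * V) / L) * 2 ^ (m + 1) + p) + t * 2 ^ (m + 2)
            = t * 2 ^ (m + 2) * ((((i : ℕ) - 2 * V) / L) * 2 ^ (m + 1) + p + 1) := by ring
          _ ≤ t * 2 ^ (m + 2) * 2 ^ (m + 2) := Nat.mul_le_mul_left _ hb'
          _ = t * 4 ^ (m + 2) := by rw [four_pow_eq]; ring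
      · intro j
        rw [Bmat_apply_right t v B₁ m ht i j hiv]
        rw [hprow ⟨((j : ℕ) / 2) % L, Nat.mod_lt _ (by positivity)⟩]
        rw [ite_one_mul_ite]
        refine if_congr ?_ rfl rfl
        show ((i : ℕ) - 2 * V) / L = ((j : ℕ) / 2) / L ∧ (((j : ℕ) / 2) % L) / S = p ↔
          (j : ℕ) / (t * 2 ^ (m + 2)) = (((i : ℕ) - 2 * V) / L) * 2 ^ (m + 1) + p
        rw [eq_comm (a := ((i : ℕ) - 2 * V) / L) (b := ((j : ℕ) / 2) / L)]
        generalize ((i : ℕ) - 2 * V) / L = A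
        rw [hLS, block_split ((j : ℕ) / 2) A p hp, Nat.div_div_eq_div_mul, h2S]

end Induction
section InductionC

variable {t v : ℕ} {C₁ : Matrix (Fin (4 * t)) (Fin v) ℤ}

set_option maxHeartbeats 2000000 in
lemma colSum_C (ht : 0 < t) (hv : 0 < v)
    (hC01 : ∀ i j, C₁ i j = 0 ∨ C₁ i j = 1)
    (hblockC : ∀ j : Fin v, ∀ b : Fin 2,
      (Finset.univ.filter fun i : Fin (4 * t) =>
        (i : ℕ) / (2 * t) = (b : ℕ) ∧ C₁ i j = 1).card = t) :
    ∀ n, 1 ≤ n → ColSum (t * 2 ^ n) t (Cmat t v C₁ n) := by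
  intro n hn
  induction n, hn using Nat.le_induction with
  | base => exact colSum_C1 ht hC01 hblockC
  | succ n hn IH =>
    obtain ⟨m, rfl⟩ : ∃ m, n = m + 1 := ⟨n - 1, by omega⟩
    intro j b hbound
    have hV : 0 < vnum v t (m + 1) := vnum_pos hv t (m + 1)
    have hS : 0 < t * 2 ^ (m + 1) := by positivity
    have hL : 0 < t * 4 ^ (m + 1) := by positivity
    have h2s : 0 < t * 2 ^ (m + 1 + 1) := by positivity
    have hSL : t * 2 ^ (m + 1) ≤ t * 4 ^ (m + 1) :=
      Nat.mul_le_mul_left _ (Nat.pow_le_pow_left (by norm_num) _)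
    have h2S : t * 2 ^ (m + 1 + 1) = 2 * (t * 2 ^ (m + 1)) := by ring
    have hvs : vnum v t (m + 1 + 1) = 2 * vnum v t (m + 1) + 2 * (t * 4 ^ (m + 1)) :=
      vnum_succ v t m
    rw [sum_block h2s b hbound]
    by_cases hj : (j : ℕ) < 2 * vnum v t (m + 1)
    · -- left part: uses C_{m+1}
      have hd : (j : ℕ) / vnum v t (m + 1) < 2 := Nat.div_lt_of_lt_mul (by omega)
      have key : ∀ r : Fin (t * 2 ^ (m + 1 + 1)),
          Cmat t v C₁ (m + 1 + 1) ⟨t * 2 ^ (m + 1 + 1) * b + (r : ℕ), by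
            have := r.isLt; omega⟩ j =
          if (r : ℕ) / (t * 2 ^ (m + 1)) = (j : ℕ) / vnum v t (m + 1) then
            Cmat t v C₁ (m + 1) ⟨(r : ℕ) % (t * 2 ^ (m + 1)),
              lt_of_lt_of_le (Nat.mod_lt _ hS) hSL⟩
              ⟨(j : ℕ) % vnum v t (m + 1), Nat.mod_lt _ hV⟩ else 0 := by
        intro r
        rw [Cmat_apply_left t v C₁ m ht hV _ j hj]
        rw [ite_mul, one_mul, zero_mul]
        have e1 : (t * 2 ^ (m + 1 + 1) * b + (r : ℕ)) / (t * 2 ^ (m + 1)) =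
            2 * b + (r : ℕ) / (t * 2 ^ (m + 1)) := by
          rw [show t * 2 ^ (m + 1 + 1) * b = t * 2 ^ (m + 1) * (2 * b) by ring,
            Nat.mul_add_div hS]
        have e2 : (t * 2 ^ (m + 1 + 1) * b + (r : ℕ)) % (t * 2 ^ (m + 1)) =
            (r : ℕ) % (t * 2 ^ (m + 1)) := by
          rw [show t * 2 ^ (m + 1 + 1) * b = t * 2 ^ (m + 1) * (2 * b) by ring,
            Nat.mul_add_mod]
        have e3 : (r : ℕ) / (t * 2 ^ (m + 1)) < 2 :=
          Nat.div_lt_of_lt_mul (by have := r.isLt; omega)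
        refine if_congr ?_ ?_ rfl
        · rw [e1, Nat.mul_add_mod 2 b, Nat.mod_eq_of_lt e3, Nat.mod_eq_of_lt hd]
        · congr 1
          exact Fin.ext e2
      rw [Finset.sum_congr rfl fun r _ => key r]
      have hdb : t * 2 ^ (m + 1) * ((j : ℕ) / vnum v t (m + 1)) + t * 2 ^ (m + 1) ≤
          t * 2 ^ (m + 1 + 1) := by
        have h1 : t * 2 ^ (m + 1) * ((j : ℕ) / vnum v t (m + 1)) ≤ t * 2 ^ (m + 1) * 1 :=
          Nat.mul_le_mul_left _ (Nat.lt_succ_iff.mp hd)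
        omega
      rw [sum_block hS _ hdb]
      have base := IH ⟨(j : ℕ) % vnum v t (m + 1), Nat.mod_lt _ hV⟩ 0
        (by rw [Nat.mul_zero, Nat.zero_add]; exact hSL)
      rw [sum_block hS 0 (by rw [Nat.mul_zero, Nat.zero_add]; exact hSL)] at base
      refine Eq.trans (Finset.sum_congr rfl fun u _ => ?_) base
      congr 1
      refine Fin.ext ?_
      show (t * 2 ^ (m + 1) * ((j : ℕ) / vnum v t (m + 1)) + (u : ℕ)) %
        (t * 2 ^ (m + 1)) = t * 2 ^ (m + 1) * 0 + (u : ℕ)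
      rw [Nat.mul_add_mod, Nat.mod_eq_of_lt u.isLt]
      omega
    · -- right part: uses P_{m+1}
      push_neg at hj
      have hj2 : (j : ℕ) - 2 * vnum v t (m + 1) < 2 * (t * 4 ^ (m + 1)) := by
        have := j.isLt; omega
      have hd : ((j : ℕ) - 2 * vnum v t (m + 1)) / (t * 4 ^ (m + 1)) < 2 :=
        Nat.div_lt_of_lt_mul (by omega)
      have key : ∀ r : Fin (t * 2 ^ (m + 1 + 1)),
          Cmat t v C₁ (m + 1 + 1) ⟨t * 2 ^ (m + 1 + 1) * b + (r : ℕ), by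
            have := r.isLt; omega⟩ j =
          if (r : ℕ) / (t * 2 ^ (m + 1)) =
              ((j : ℕ) - 2 * vnum v t (m + 1)) / (t * 4 ^ (m + 1)) then
            Pmat t (m + 1) ⟨(r : ℕ) % (t * 2 ^ (m + 1)),
              lt_of_lt_of_le (Nat.mod_lt _ hS) hSL⟩
              ⟨((j : ℕ) - 2 * vnum v t (m + 1)) % (t * 4 ^ (m + 1)),
                Nat.mod_lt _ hL⟩ else 0 := by
        intro r
        rw [Cmat_apply_right t v C₁ m ht _ j hj]
        rw [ite_mul, one_mul, zero_mul]
        have e1 : (t * 2 ^ (m + 1 + 1) * b + (r : ℕ)) / (t * 2 ^ (m + 1)) =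
            2 * b + (r : ℕ) / (t * 2 ^ (m + 1)) := by
          rw [show t * 2 ^ (m + 1 + 1) * b = t * 2 ^ (m + 1) * (2 * b) by ring,
            Nat.mul_add_div hS]
        have e2 : (t * 2 ^ (m + 1 + 1) * b + (r : ℕ)) % (t * 2 ^ (m + 1)) =
            (r : ℕ) % (t * 2 ^ (m + 1)) := by
          rw [show t * 2 ^ (m + 1 + 1) * b = t * 2 ^ (m + 1) * (2 * b) by ring,
            Nat.mul_add_mod]
        have e3 : (r : ℕ) / (t * 2 ^ (m + 1)) < 2 :=
          Nat.div_lt_of_lt_mul (by have := r.isLt; omega)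
        refine if_congr ?_ ?_ rfl
        · rw [e1, Nat.mul_add_mod 2 b, Nat.mod_eq_of_lt e3, Nat.mod_eq_of_lt hd]
        · congr 1
          exact Fin.ext e2
      rw [Finset.sum_congr rfl fun r _ => key r]
      have hdb : t * 2 ^ (m + 1) * (((j : ℕ) - 2 * vnum v t (m + 1)) / (t * 4 ^ (m + 1)))
          + t * 2 ^ (m + 1) ≤ t * 2 ^ (m + 1 + 1) := by
        have h1 : t * 2 ^ (m + 1) * (((j : ℕ) - 2 * vnum v t (m + 1)) / (t * 4 ^ (m + 1)))
            ≤ t * 2 ^ (m + 1) * 1 := Nat.mul_le_mul_left _ (Nat.lt_succ_iff.mp hd)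
        omega
      rw [sum_block hS _ hdb]
      have base := colSum_P t (m + 1) ht
        ⟨((j : ℕ) - 2 * vnum v t (m + 1)) % (t * 4 ^ (m + 1)), Nat.mod_lt _ hL⟩ 0
        (by rw [Nat.mul_zero, Nat.zero_add]; exact hSL)
      rw [sum_block hS 0 (by rw [Nat.mul_zero, Nat.zero_add]; exact hSL)] at base
      refine Eq.trans (Finset.sum_congr rfl fun u _ => ?_) base
      congr 1
      refine Fin.ext ?_
      show (t * 2 ^ (m + 1) * (((j : ℕ) - 2 * vnum v t (m + 1)) / (t * 4 ^ (m + 1)))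
          + (u : ℕ)) % (t * 2 ^ (m + 1)) = t * 2 ^ (m + 1) * 0 + (u : ℕ)
      rw [Nat.mul_add_mod, Nat.mod_eq_of_lt u.isLt]
      omega

end InductionC

/-- Equation (12): `B_n · C_n = t · J_{v_n}` where `v_n = (v+(2^{n+1}−4)t)·2^{n−1}`. -/
theorem Bmat_mul_Cmat
    (t v k : ℕ) (ht : 0 < t) (hv : 0 < v) (hk : 0 < k)
    (B₁ : Matrix (Fin v) (Fin (4 * t)) ℤ) (C₁ : Matrix (Fin (4 * t)) (Fin v) ℤ)
    (hB01 : ∀ i j, B₁ i j = 0 ∨ B₁ i j = 1) (hC01 : ∀ i j, C₁ i j = 0 ∨ C₁ i j = 1)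
    (hblockB : ∀ i : Fin v, ∃! b : Fin 2, ∀ j : Fin (4 * t),
      B₁ i j = if (j : ℕ) / (2 * t) = (b : ℕ) then 1 else 0)
    (hblockC : ∀ j : Fin v, ∀ b : Fin 2,
      (Finset.univ.filter fun i : Fin (4 * t) =>
        (i : ℕ) / (2 * t) = (b : ℕ) ∧ C₁ i j = 1).card = t)
    (n : ℕ) (hn : 1 ≤ n) :
    Bmat t v B₁ n * Cmat t v C₁ n = (t : ℤ) • Jmat (vnum v t n) (vnum v t n) := by
  have hs : 0 < t * 2 ^ n := by positivity
  exact mul_eq_smul_J hs (Bmat t v B₁ n) (Cmat t v C₁ n)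
    (rowBlocky_B ht hv hblockB n hn) (colSum_C ht hv hC01 hblockC n hn)
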